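/- Let p be an odd prime. Then Σ_{a ∈ 𝔽_p^×} φ(a)K(a)⁴ − 3p·Σ_{a ∈ 𝔽_p^×} φ(a)K(a)² = p² + p·Σ_{x ∈ 𝔽_p^×} φ(x)·H₂(x)²; equivalently, T_{4,φ}/p = p + p²·Σ_{x ∈ 𝔽_p^×} φ(x)·₂F₁(φ,φ;ε|x)². -/

import Mathlib

open Finset

/-- The quadratic character of `ZMod p`, with values in `ℂ` (vanishing at `0`). -/
noncomputable def Φ (p : ℕ) [Fact p.Prime] : MulChar (ZMod p) ℂ :=
  (quadraticChar (ZMod p)).ringHomComp (Int.castRingHom ℂ)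

/-- The standard additive character `x ↦ e^(2πi x̃ / p)` of `ZMod p`. -/
noncomputable def θ (p : ℕ) (x : ZMod p) : ℂ :=
  Complex.exp (2 * Real.pi * Complex.I * (x.val : ℂ) / p)

/-- The Kloosterman sum `K(a) = Σ_{x ∈ 𝔽_p^×} θ(x + a x⁻¹)`. -/
noncomputable def K (p : ℕ) [Fact p.Prime] (a : ZMod p) : ℂ :=
  ∑ x ∈ univ.filter (fun x : ZMod p => x ≠ 0), θ p (x + a * x⁻¹)

/-- `H₂(x) = Σ_u φ(u) φ(1-u) φ(1-xu)`, so that `₂F₁(φ,φ;ε|x) = φ(-1) H₂(x) / p`. -/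
noncomputable def H₂ (p : ℕ) [Fact p.Prime] (x : ZMod p) : ℂ :=
  ∑ u : ZMod p, Φ p u * Φ p (1 - u) * Φ p (1 - x * u)

set_option linter.unusedSectionVars false
set_option linter.unusedVariables false

section Basics
variable (p : ℕ) [Fact p.Prime]

lemma phi_apply (x : ZMod p) : Φ p x = ((quadraticChar (ZMod p) x : ℤ) : ℂ) := rfl

lemma phi_zero : Φ p (0 : ZMod p) = 0 := by
  simp [phi_apply]

lemma phi_mul (x y : ZMod p) : Φ p (x * y) = Φ p x * Φ p y := map_mul _ _ _

lemma phi_one : Φ p (1 : ZMod p) = 1 := map_one _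

variable (hp : Odd p)
include hp

lemma hchar : ringChar (ZMod p) ≠ 2 := by
  rw [ZMod.ringChar_zmod_n]
  rintro rfl
  exact (Nat.not_odd_iff_even.mpr (even_two)) hp

omit hp in
lemma phi_self_mul {x : ZMod p} (hx : x ≠ 0) : Φ p x * Φ p x = 1 := by
  rw [phi_apply, ← Int.cast_mul, ← sq, quadraticChar_sq_one hx]
  norm_num

lemma phi_inv (x : ZMod p) : Φ p x⁻¹ = Φ p x := by
  rcases eq_or_ne x 0 with rfl | hx
  · simp
  · have h1 : Φ p x * Φ p x⁻¹ = 1 := by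
      rw [← phi_mul, mul_inv_cancel₀ hx, phi_one]
    have h2 := phi_self_mul p hx
    calc Φ p x⁻¹ = Φ p x * Φ p x * Φ p x⁻¹ := by rw [h2, one_mul]
    _ = Φ p x * (Φ p x * Φ p x⁻¹) := by ring
    _ = Φ p x := by rw [h1, mul_one]

lemma phi_sum : ∑ x : ZMod p, Φ p x = 0 := by
  have := quadraticChar_sum_zero (hchar p hp)
  calc ∑ x : ZMod p, Φ p x = ((↑(∑ x : ZMod p, quadraticChar (ZMod p) x) : ℤ) : ℂ) := by
        push_cast [phi_apply]; rfl
  _ = 0 := by rw [this]; norm_num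

lemma phi_two_ne_zero : (2 : ZMod p) ≠ 0 := by
  intro h
  have h2 : ((2 : ℕ) : ZMod p) = 0 := by push_cast; exact h
  have hd : p ∣ 2 := (ZMod.natCast_eq_zero_iff _ _).mp h2
  have := (Nat.prime_dvd_prime_iff_eq (Fact.out) Nat.prime_two).mp hd
  subst this
  exact (by norm_num : ¬ Odd 2) hp

end Basics


section Theta
variable (p : ℕ) [Fact p.Prime]

lemma pC_ne_zero : (p : ℂ) ≠ 0 := by
  exact_mod_cast (Nat.Prime.pos Fact.out).ne'

lemma theta_natCast (k : ℕ) : θ p (k : ZMod p) = Complex.exp (2 * Real.pi * Complex.I * k / p) := by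
  have hp0 : (p : ℂ) ≠ 0 := pC_ne_zero p
  rw [θ, ZMod.val_natCast]
  have hk : (k : ℂ) = ((k % p : ℕ) : ℂ) + ((k / p : ℕ) : ℂ) * p := by
    exact_mod_cast congrArg (Nat.cast : ℕ → ℂ) (Nat.mod_add_div' k p).symm
  rw [hk]
  rw [show 2 * Real.pi * Complex.I * (((k % p : ℕ) : ℂ) + ((k / p : ℕ) : ℂ) * (p:ℂ)) / p
      = 2 * Real.pi * Complex.I * ((k % p : ℕ) : ℂ) / p + (((k / p : ℕ) : ℤ) : ℂ) * (2 * Real.pi * Complex.I) by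
    rw [Int.cast_natCast]; field_simp]
  rw [Complex.exp_add, Complex.exp_int_mul_two_pi_mul_I, mul_one]

lemma theta_zero : θ p 0 = 1 := by
  simp [θ]

lemma theta_add (x y : ZMod p) : θ p (x + y) = θ p x * θ p y := by
  have hx : ((x.val : ℕ) : ZMod p) = x := ZMod.natCast_zmod_val x
  have hy : ((y.val : ℕ) : ZMod p) = y := ZMod.natCast_zmod_val y
  have h : x + y = ((x.val + y.val : ℕ) : ZMod p) := by push_cast [hx, hy]; rfl
  rw [h, theta_natCast, show θ p x = θ p ((x.val : ℕ) : ZMod p) by rw [hx],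
    show θ p y = θ p ((y.val : ℕ) : ZMod p) by rw [hy], theta_natCast, theta_natCast,
    ← Complex.exp_add]
  push_cast
  ring_nf

lemma theta_one_ne_one : θ p 1 ≠ 1 := by
  have hp1 : 1 < p := (Fact.out : p.Prime).one_lt
  have hv : (1 : ZMod p).val = 1 := ZMod.val_one p
  rw [θ, hv]
  intro h
  obtain ⟨n, hn⟩ := Complex.exp_eq_one_iff.mp h
  have h2 : (2 * (Real.pi:ℂ) * Complex.I) ≠ 0 := by
    simp [Real.pi_ne_zero, Complex.I_ne_zero]
  rw [div_eq_iff (pC_ne_zero p)] at hn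
  have hc : (n : ℂ) * p = 1 := by
    refine mul_right_cancel₀ h2 ?_
    push_cast at hn ⊢
    linear_combination -hn
  have hz' : n * (p : ℤ) = 1 := by exact_mod_cast hc
  have : (p : ℤ) ∣ 1 := ⟨n, by linarith [mul_comm n (p:ℤ)]⟩
  have := Int.le_of_dvd one_pos this
  omega

lemma theta_sum : ∑ x : ZMod p, θ p x = 0 := by
  by_contra hS
  have h : ∑ x : ZMod p, θ p x * θ p 1 = ∑ x : ZMod p, θ p x :=
    Fintype.sum_bijective (· + (1:ZMod p)) (Equiv.addRight (1:ZMod p)).bijective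
      (fun x => θ p x * θ p 1) (θ p) (fun x => (theta_add p x 1).symm)
  refine theta_one_ne_one p (mul_left_cancel₀ hS ?_)
  rw [← Finset.sum_mul] at h
  rw [mul_one]
  exact h

lemma theta_mul_sum {s : ZMod p} (hs : s ≠ 0) : ∑ x : ZMod p, θ p (x * s) = 0 := by
  rw [← theta_sum p]
  exact Fintype.sum_bijective (· * s) (mulRight_bijective₀ s hs) _ _ (fun x => rfl)

lemma theta_nz_sum {s : ZMod p} (hs : s ≠ 0) :
    ∑ x ∈ univ.filter (fun x : ZMod p => x ≠ 0), θ p (x * s) = -1 := by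
  have h := Finset.sum_filter_add_sum_filter_not (univ : Finset (ZMod p))
    (fun x => x ≠ 0) (fun x => θ p (x * s))
  have h0 : univ.filter (fun x : ZMod p => ¬ x ≠ 0) = {0} := by
    ext x; simp
  rw [h0, Finset.sum_singleton, zero_mul, theta_zero, theta_mul_sum p hs] at h
  linear_combination h

end Theta


section Gauss
variable (p : ℕ) [Fact p.Prime]

lemma neg_one_ne_zero' : (-1 : ZMod p) ≠ 0 := by
  intro h
  have : (1 : ZMod p) = 0 := by linear_combination -h
  exact one_ne_zero this

lemma nz_card : (univ.filter (fun x : ZMod p => x ≠ 0)).card = p - 1 := by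
  rw [Finset.filter_ne', Finset.card_erase_of_mem (mem_univ 0), Finset.card_univ, ZMod.card]

lemma nz_sum_eq_univ_sum (f : ZMod p → ℂ) (h0 : f 0 = 0) :
    ∑ x ∈ univ.filter (fun x : ZMod p => x ≠ 0), f x = ∑ x : ZMod p, f x := by
  rw [Finset.sum_filter]
  refine Finset.sum_congr rfl fun x _ => ?_
  by_cases hx : x = 0
  · simp [hx, h0]
  · simp [hx]

noncomputable def G (p : ℕ) [Fact p.Prime] : ℂ := ∑ a : ZMod p, Φ p a * θ p a

variable (hp : Odd p)
include hp

lemma gauss_twist (s : ZMod p) :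
    ∑ a : ZMod p, Φ p a * θ p (a * s) = Φ p s * G p := by
  rcases eq_or_ne s 0 with rfl | hs
  · simp only [mul_zero, theta_zero, mul_one, phi_zero, zero_mul]
    exact phi_sum p hp
  · have key := Fintype.sum_bijective (· * s) (mulRight_bijective₀ s hs)
      (fun a => Φ p a * θ p (a * s)) (fun b => Φ p (b * s⁻¹) * θ p (b * s⁻¹ * s)) ?_
    · rw [key]
      have : ∀ b : ZMod p, Φ p (b * s⁻¹) * θ p (b * s⁻¹ * s) = Φ p s * (Φ p b * θ p b) := by
        intro b
        rw [mul_assoc, inv_mul_cancel₀ hs, mul_one, phi_mul, phi_inv p hp]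
        ring
      rw [Finset.sum_congr rfl (fun b _ => this b), ← Finset.mul_sum, G]
    · intro a
      rw [mul_assoc, mul_inv_cancel₀ hs, mul_one]

lemma sq_theta_sum (s : ZMod p) :
    ∑ a : ZMod p, Φ p a * Φ p a * θ p (a * s) =
      if s = 0 then ((p : ℂ) - 1) else -1 := by
  have h1 : ∑ a : ZMod p, Φ p a * Φ p a * θ p (a * s) =
      ∑ a ∈ univ.filter (fun a : ZMod p => a ≠ 0), θ p (a * s) := by
    rw [← nz_sum_eq_univ_sum p (fun a => Φ p a * Φ p a * θ p (a * s)) (by simp [phi_zero])]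
    refine Finset.sum_congr rfl fun a ha => ?_
    rw [phi_self_mul p (Finset.mem_filter.mp ha).2, one_mul]
  rw [h1]
  rcases eq_or_ne s 0 with rfl | hs
  · simp only [mul_zero, theta_zero, if_pos rfl, Finset.sum_const, nsmul_eq_mul, mul_one, nz_card]
    have : (1:ℕ) ≤ p := (Fact.out : p.Prime).one_lt.le
    push_cast [Nat.cast_sub this]
    ring
  · rw [if_neg hs]
    exact theta_nz_sum p hs

lemma G_sq : G p * G p = Φ p (-1) * p := by
  have key : ∀ a : ZMod p, (Φ p a * θ p a) * G p
      = ∑ t : ZMod p, Φ p t * (Φ p a * Φ p a * θ p (a * (1 + t))) := by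
    intro a
    rcases eq_or_ne a 0 with rfl | ha
    · simp [phi_zero]
    · have hb := Fintype.sum_bijective (a * ·) (mulLeft_bijective₀ a ha)
        (fun t => (Φ p a * θ p a) * (Φ p (a * t) * θ p (a * t)))
        (fun b => (Φ p a * θ p a) * (Φ p b * θ p b)) (fun t => rfl)
      calc (Φ p a * θ p a) * G p = ∑ b : ZMod p, (Φ p a * θ p a) * (Φ p b * θ p b) := by
            rw [G, Finset.mul_sum]
      _ = ∑ t : ZMod p, (Φ p a * θ p a) * (Φ p (a * t) * θ p (a * t)) := hb.symm
      _ = ∑ t : ZMod p, Φ p t * (Φ p a * Φ p a * θ p (a * (1 + t))) := by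
            refine Finset.sum_congr rfl fun t _ => ?_
            rw [phi_mul, show a * (1 + t) = a + a * t by ring, theta_add]
            ring
  calc G p * G p = ∑ a : ZMod p, (Φ p a * θ p a) * G p := by rw [G, Finset.sum_mul]
  _ = ∑ a : ZMod p, ∑ t : ZMod p, Φ p t * (Φ p a * Φ p a * θ p (a * (1 + t))) :=
      Finset.sum_congr rfl fun a _ => key a
  _ = ∑ t : ZMod p, ∑ a : ZMod p, Φ p t * (Φ p a * Φ p a * θ p (a * (1 + t))) := Finset.sum_comm
  _ = ∑ t : ZMod p, Φ p t * (if (1 + t) = 0 then ((p:ℂ) - 1) else -1) := by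
      refine Finset.sum_congr rfl fun t _ => ?_
      rw [← Finset.mul_sum, sq_theta_sum p hp]
  _ = Φ p (-1) * p := by
      rw [← Finset.add_sum_erase _ _ (mem_univ (-1 : ZMod p))]
      rw [if_pos (by ring)]
      have h2 : ∀ t ∈ univ.erase (-1 : ZMod p),
          Φ p t * (if (1 + t) = 0 then ((p:ℂ) - 1) else -1) = -Φ p t := by
        intro t ht
        have : (1 : ZMod p) + t ≠ 0 := by
          intro h
          exact (Finset.mem_erase.mp ht).1 (by linear_combination h)
        rw [if_neg this]; ring
      rw [Finset.sum_congr rfl h2, Finset.sum_neg_distrib]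
      have h3 : ∑ t ∈ univ.erase (-1 : ZMod p), Φ p t = - Φ p (-1) := by
        have := Finset.add_sum_erase _ (Φ p) (mem_univ (-1 : ZMod p))
        rw [phi_sum p hp] at this
        linear_combination this
      rw [h3]
      ring

end Gauss


noncomputable def Cs (p : ℕ) [Fact p.Prime] (b : ZMod p) : ℂ :=
  ∑ t : ZMod p, Φ p t * Φ p (t + 1) * Φ p (t + b)

section Moments
variable (p : ℕ) [Fact p.Prime]

/-- reindex a sum over nonzero elements by left multiplication -/
lemma nz_mul_left {x : ZMod p} (hx : x ≠ 0) (f : ZMod p → ℂ) :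
    ∑ y ∈ univ.filter (fun y : ZMod p => y ≠ 0), f y
      = ∑ t ∈ univ.filter (fun t : ZMod p => t ≠ 0), f (x * t) := by
  refine Finset.sum_nbij' (fun y => x⁻¹ * y) (fun t => x * t) ?_ ?_ ?_ ?_ ?_
  · intro a ha
    simp only [mem_filter, mem_univ, true_and] at *
    exact mul_ne_zero (inv_ne_zero hx) ha
  · intro a ha
    simp only [mem_filter, mem_univ, true_and] at *
    exact mul_ne_zero hx ha
  · intro a _; field_simp
  · intro a _; field_simp
  · intro a _
    rw [← mul_assoc, mul_inv_cancel₀ hx, one_mul]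

lemma nz_mul_right {c : ZMod p} (hc : c ≠ 0) (f : ZMod p → ℂ) :
    ∑ y ∈ univ.filter (fun y : ZMod p => y ≠ 0), f y
      = ∑ t ∈ univ.filter (fun t : ZMod p => t ≠ 0), f (t * c) := by
  rw [nz_mul_left p hc f]
  exact Finset.sum_congr rfl fun t _ => by rw [mul_comm]

lemma univ_mul_right {c : ZMod p} (hc : c ≠ 0) (f : ZMod p → ℂ) :
    ∑ y : ZMod p, f y = ∑ t : ZMod p, f (t * c) :=
  (Fintype.sum_bijective (· * c) (mulRight_bijective₀ c hc) _ _ (fun x => rfl)).symm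

variable (hp : Odd p)
include hp

lemma first_moment : ∑ a : ZMod p, Φ p a * K p a = Φ p (-1) * p := by
  have step : ∀ a : ZMod p, Φ p a * K p a
      = ∑ x ∈ univ.filter (fun x : ZMod p => x ≠ 0), θ p x * (Φ p a * θ p (a * x⁻¹)) := by
    intro a
    rw [K, Finset.mul_sum]
    refine Finset.sum_congr rfl fun x _ => ?_
    rw [theta_add]
    ring
  calc ∑ a : ZMod p, Φ p a * K p a
      = ∑ a : ZMod p, ∑ x ∈ univ.filter (fun x : ZMod p => x ≠ 0),
          θ p x * (Φ p a * θ p (a * x⁻¹)) := Finset.sum_congr rfl fun a _ => step a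
    _ = ∑ x ∈ univ.filter (fun x : ZMod p => x ≠ 0), ∑ a : ZMod p,
          θ p x * (Φ p a * θ p (a * x⁻¹)) := Finset.sum_comm
    _ = ∑ x ∈ univ.filter (fun x : ZMod p => x ≠ 0), θ p x * (Φ p x * G p) := by
        refine Finset.sum_congr rfl fun x hx => ?_
        rw [← Finset.mul_sum, gauss_twist p hp x⁻¹, phi_inv p hp]
    _ = (∑ x ∈ univ.filter (fun x : ZMod p => x ≠ 0), Φ p x * θ p x) * G p := by
        rw [Finset.sum_mul]
        exact Finset.sum_congr rfl fun x _ => by ring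
    _ = G p * G p := by
        rw [nz_sum_eq_univ_sum p _ (by simp [phi_zero]), ← G]
    _ = Φ p (-1) * p := G_sq p hp

lemma M_lemma (b : ZMod p) :
    ∑ a : ZMod p, Φ p a * (K p a * K p (a * b)) = Φ p (-1) * (p : ℂ) * Cs p b := by
  have expand : ∀ a : ZMod p, Φ p a * (K p a * K p (a * b))
      = ∑ x ∈ univ.filter (fun x : ZMod p => x ≠ 0),
          ∑ y ∈ univ.filter (fun y : ZMod p => y ≠ 0),
            θ p x * θ p y * (Φ p a * θ p (a * (x⁻¹ + b * y⁻¹))) := by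
    intro a
    rw [K, K, Finset.sum_mul_sum, Finset.mul_sum]
    refine Finset.sum_congr rfl fun x _ => ?_
    rw [Finset.mul_sum]
    refine Finset.sum_congr rfl fun y _ => ?_
    rw [theta_add, theta_add, show a * (x⁻¹ + b * y⁻¹) = a * x⁻¹ + a * b * y⁻¹ by ring, theta_add]
    ring
  calc ∑ a : ZMod p, Φ p a * (K p a * K p (a * b))
      = ∑ x ∈ univ.filter (fun x : ZMod p => x ≠ 0),
          ∑ y ∈ univ.filter (fun y : ZMod p => y ≠ 0),
            ∑ a : ZMod p, θ p x * θ p y * (Φ p a * θ p (a * (x⁻¹ + b * y⁻¹))) := by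
        rw [Finset.sum_congr rfl fun a (_ : a ∈ univ) => expand a]
        rw [Finset.sum_comm]
        refine Finset.sum_congr rfl fun x _ => Finset.sum_comm
    _ = ∑ x ∈ univ.filter (fun x : ZMod p => x ≠ 0),
          ∑ y ∈ univ.filter (fun y : ZMod p => y ≠ 0),
            θ p x * θ p y * (Φ p (x⁻¹ + b * y⁻¹) * G p) := by
        refine Finset.sum_congr rfl fun x _ => Finset.sum_congr rfl fun y _ => ?_
        rw [← Finset.mul_sum, gauss_twist p hp]
    _ = ∑ x ∈ univ.filter (fun x : ZMod p => x ≠ 0),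
          ∑ t ∈ univ.filter (fun t : ZMod p => t ≠ 0),
            θ p x * θ p (x * t) * (Φ p (x⁻¹ + b * (x * t)⁻¹) * G p) := by
        refine Finset.sum_congr rfl fun x hx => ?_
        exact nz_mul_left p (Finset.mem_filter.mp hx).2 _
    _ = ∑ t ∈ univ.filter (fun t : ZMod p => t ≠ 0),
          Φ p t * Φ p (t + b) * Φ p (1 + t) * (G p * G p) := by
        rw [Finset.sum_comm]
        refine Finset.sum_congr rfl fun t ht => ?_
        have ht0 := (Finset.mem_filter.mp ht).2
        have key : ∀ x ∈ univ.filter (fun x : ZMod p => x ≠ 0),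
            θ p x * θ p (x * t) * (Φ p (x⁻¹ + b * (x * t)⁻¹) * G p)
              = (Φ p t * Φ p (t + b) * G p) * (Φ p x * θ p (x * (1 + t))) := by
          intro x hx
          have hx0 := (Finset.mem_filter.mp hx).2
          have harg : x⁻¹ + b * (x * t)⁻¹ = x⁻¹ * (t⁻¹ * (t + b)) := by
            field_simp
          rw [harg, phi_mul, phi_mul, phi_inv p hp, phi_inv p hp,
            show x * (1 + t) = x + x * t by ring, theta_add]
          ring
        rw [Finset.sum_congr rfl key, ← Finset.mul_sum,
          nz_sum_eq_univ_sum p _ (by simp [phi_zero]), gauss_twist p hp]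
        ring
    _ = Φ p (-1) * (p : ℂ) * Cs p b := by
        have key : ∀ t ∈ univ.filter (fun t : ZMod p => t ≠ 0),
            Φ p t * Φ p (t + b) * Φ p (1 + t) * (G p * G p)
            = (Φ p (-1) * p) * (Φ p t * Φ p (t + 1) * Φ p (t + b)) := by
          intro t ht
          rw [G_sq p hp, add_comm 1 t]
          ring
        rw [Finset.sum_congr rfl key, ← Finset.mul_sum,
          nz_sum_eq_univ_sum p _ (by simp [phi_zero]), ← Cs]

end Moments


section Ksq
variable (p : ℕ) [Fact p.Prime]

lemma phi_apply' (x : ZMod p) : Φ p x = ((quadraticChar (ZMod p) x : ℤ) : ℂ) := rfl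

lemma inner_t (a t : ZMod p) (ht : t ≠ 0) (ht1 : t ≠ -1) :
    ∑ x ∈ univ.filter (fun x : ZMod p => x ≠ 0), θ p (x + a * x⁻¹) * θ p (x * t + a * (x * t)⁻¹)
      = K p (a * ((1 + t) ^ 2 * t⁻¹)) := by
  have h1t : (1 : ZMod p) + t ≠ 0 := by
    intro h; exact ht1 (by linear_combination h)
  rw [K]
  refine Finset.sum_nbij' (fun x => x * (1 + t)) (fun u => u * (1 + t)⁻¹) ?_ ?_ ?_ ?_ ?_
  · intro x hx
    simp only [mem_filter, mem_univ, true_and] at *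
    exact mul_ne_zero hx h1t
  · intro u hu
    simp only [mem_filter, mem_univ, true_and] at *
    exact mul_ne_zero hu (inv_ne_zero h1t)
  · intro x _; field_simp
  · intro u _; field_simp
  · intro x hx
    have hx0 : x ≠ 0 := (Finset.mem_filter.mp hx).2
    rw [← theta_add]
    congr 1
    field_simp
    ring

lemma sigma_reindex (hp : Odd p) (F : ZMod p → ℂ) :
    ∑ t ∈ (univ.filter (fun t : ZMod p => t ≠ 0)).erase (-1), F ((1 + t) ^ 2 * t⁻¹)
      = ∑ q ∈ univ.filter (fun q : ZMod p × ZMod p => q.1 ≠ 0 ∧ q.2 ^ 2 = q.1 ^ 2 - 4 * q.1),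
          F q.1 := by
  have h2 : (2 : ZMod p) ≠ 0 := phi_two_ne_zero p hp
  have h4 : (4 : ZMod p) ≠ 0 := by
    intro h; exact h2 (by
      have : (2 : ZMod p) * 2 = 0 := by linear_combination h
      rcases mul_eq_zero.mp this with h' | h' <;> exact h')
  refine Finset.sum_nbij' (fun t => ((1 + t) ^ 2 * t⁻¹, t - t⁻¹))
    (fun q => (q.1 - 2 + q.2) * (2 : ZMod p)⁻¹) ?_ ?_ ?_ ?_ ?_
  · intro t ht
    obtain ⟨ht1, ht0'⟩ := Finset.mem_erase.mp ht
    have ht0 : t ≠ 0 := (Finset.mem_filter.mp ht0').2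
    have h1t : (1 : ZMod p) + t ≠ 0 := by intro h; exact ht1 (by linear_combination h)
    simp only [mem_filter, mem_univ, true_and]
    constructor
    · exact mul_ne_zero (pow_ne_zero 2 h1t) (inv_ne_zero ht0)
    · field_simp
      ring
  · rintro ⟨c, w⟩ hq
    obtain ⟨hc, hw⟩ := (Finset.mem_filter.mp hq).2
    simp only at hc hw ⊢
    rw [Finset.mem_erase, Finset.mem_filter]
    refine ⟨?_, mem_univ _, ?_⟩
    · intro h
      have h' : c - 2 + w = -2 := by
        have := mul_right_cancel₀ (inv_ne_zero h2) (h.trans (by field_simp : (-1 : ZMod p) = -2 * (2:ZMod p)⁻¹))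
        exact this
      have hwc : w = -c := by linear_combination h'
      rw [hwc] at hw
      have : (4 : ZMod p) * c = 0 := by linear_combination hw
      rcases mul_eq_zero.mp this with h'' | h'' <;> [exact h4 h''; exact hc h'']
    · intro h
      have h' : c - 2 + w = 0 := by
        have := mul_right_cancel₀ (inv_ne_zero h2) (h.trans (by simp : (0 : ZMod p) = 0 * (2:ZMod p)⁻¹))
        exact this
      have hwc : w = 2 - c := by linear_combination h'
      rw [hwc] at hw
      have : (4 : ZMod p) = 0 := by linear_combination hw
      exact h4 this
  · intro t ht
    obtain ⟨ht1, ht0'⟩ := Finset.mem_erase.mp ht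
    have ht0 : t ≠ 0 := (Finset.mem_filter.mp ht0').2
    simp only
    field_simp
    ring
  · rintro ⟨c, w⟩ hq
    obtain ⟨hc, hw⟩ := (Finset.mem_filter.mp hq).2
    simp only at hc hw ⊢
    set t : ZMod p := (c - 2 + w) * (2 : ZMod p)⁻¹ with hts
    have ht0 : t ≠ 0 := by
      intro h
      have h' : c - 2 + w = 0 := mul_right_cancel₀ (inv_ne_zero h2)
        (h.trans (by simp : (0 : ZMod p) = 0 * (2:ZMod p)⁻¹))
      have hwc : w = 2 - c := by linear_combination h'
      rw [hwc] at hw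
      exact h4 (by linear_combination hw)
    have tinv : t⁻¹ = (c - 2 - w) * (2 : ZMod p)⁻¹ := by
      refine inv_eq_of_mul_eq_one_right ?_
      rw [hts]
      field_simp
      linear_combination -hw
    rw [Prod.mk.injEq]
    constructor
    · rw [tinv, hts]
      field_simp
      ring_nf
      linear_combination (-(w:ZMod p) - c - 2) * hw
    · rw [tinv, hts]
      field_simp
      ring
  · intro t _
    rfl

end Ksq

section Ksq2
variable (p : ℕ) [Fact p.Prime] (hp : Odd p)
include hp

lemma pair_sum (F : ZMod p → ℂ) :
    ∑ q ∈ univ.filter (fun q : ZMod p × ZMod p => q.1 ≠ 0 ∧ q.2 ^ 2 = q.1 ^ 2 - 4 * q.1), F q.1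
      = ∑ c ∈ univ.filter (fun c : ZMod p => c ≠ 0), (1 + Φ p (c ^ 2 - 4 * c)) * F c := by
  have hchar2 : ringChar (ZMod p) ≠ 2 := by
    rw [ZMod.ringChar_zmod_n]
    rintro rfl
    exact (by norm_num : ¬ Odd 2) hp
  rw [Finset.sum_filter, Finset.sum_filter, Fintype.sum_prod_type]
  refine Finset.sum_congr rfl fun c _ => ?_
  rcases eq_or_ne c 0 with rfl | hc
  · simp
  · have hdc : ∀ w : ZMod p,
        (if c ≠ 0 ∧ w ^ 2 = c ^ 2 - 4 * c then F c else 0)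
          = (if w ^ 2 = c ^ 2 - 4 * c then F c else 0) := by
      intro w
      by_cases hw : w ^ 2 = c ^ 2 - 4 * c <;> simp [hw, hc]
    rw [Finset.sum_congr rfl fun w _ => hdc w, if_pos hc, ← Finset.sum_filter,
      Finset.sum_const, nsmul_eq_mul]
    have hcard := quadraticChar_card_sqrts hchar2 (c ^ 2 - 4 * c)
    have hfin : ({x : ZMod p | x ^ 2 = c ^ 2 - 4 * c}).toFinset
        = univ.filter (fun w : ZMod p => w ^ 2 = c ^ 2 - 4 * c) := by
      ext w; simp
    rw [hfin] at hcard
    have : ((univ.filter (fun w : ZMod p => w ^ 2 = c ^ 2 - 4 * c)).card : ℂ)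
        = 1 + Φ p (c ^ 2 - 4 * c) := by
      rw [phi_apply']
      exact_mod_cast congrArg (fun z : ℤ => (z : ℂ)) (hcard.trans (add_comm _ 1))
    rw [this]

omit hp in
lemma sum_K_shift {a : ZMod p} (ha : a ≠ 0) :
    ∑ c ∈ univ.filter (fun c : ZMod p => c ≠ 0), K p (a * c) = 1 := by
  have step : ∀ c : ZMod p, K p (a * c)
      = ∑ x ∈ univ.filter (fun x : ZMod p => x ≠ 0), θ p x * θ p (c * (a * x⁻¹)) := by
    intro c
    rw [K]
    refine Finset.sum_congr rfl fun x _ => ?_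
    rw [show x + a * c * x⁻¹ = x + c * (a * x⁻¹) by ring, theta_add]
  rw [Finset.sum_congr rfl fun c _ => step c, Finset.sum_comm]
  have inner : ∀ x ∈ univ.filter (fun x : ZMod p => x ≠ 0),
      ∑ c ∈ univ.filter (fun c : ZMod p => c ≠ 0), θ p x * θ p (c * (a * x⁻¹))
        = θ p x * (-1) := by
    intro x hx
    have hx0 : x ≠ 0 := (Finset.mem_filter.mp hx).2
    rw [← Finset.mul_sum, theta_nz_sum p (mul_ne_zero ha (inv_ne_zero hx0))]
  rw [Finset.sum_congr rfl inner]
  have : ∑ x ∈ univ.filter (fun x : ZMod p => x ≠ 0), θ p x = -1 := by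
    have := theta_nz_sum p (one_ne_zero : (1 : ZMod p) ≠ 0)
    simpa using this
  rw [← Finset.sum_mul, this]
  norm_num

lemma K_sq {a : ZMod p} (ha : a ≠ 0) :
    K p a ^ 2 = p + ∑ c ∈ univ.filter (fun c : ZMod p => c ≠ 0),
      Φ p (c ^ 2 - 4 * c) * K p (a * c) := by
  have hmem : (-1 : ZMod p) ∈ univ.filter (fun t : ZMod p => t ≠ 0) := by
    simp only [mem_filter, mem_univ, true_and]
    exact neg_one_ne_zero' p
  have hp1 : (1:ℕ) ≤ p := (Fact.out : p.Prime).one_lt.le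
  calc K p a ^ 2
      = ∑ x ∈ univ.filter (fun x : ZMod p => x ≠ 0),
          ∑ y ∈ univ.filter (fun y : ZMod p => y ≠ 0),
            θ p (x + a * x⁻¹) * θ p (y + a * y⁻¹) := by
        rw [sq, K, Finset.sum_mul_sum]
    _ = ∑ x ∈ univ.filter (fun x : ZMod p => x ≠ 0),
          ∑ t ∈ univ.filter (fun t : ZMod p => t ≠ 0),
            θ p (x + a * x⁻¹) * θ p (x * t + a * (x * t)⁻¹) := by
        refine Finset.sum_congr rfl fun x hx => ?_
        exact nz_mul_left p (Finset.mem_filter.mp hx).2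
          (fun y => θ p (x + a * x⁻¹) * θ p (y + a * y⁻¹))
    _ = ∑ t ∈ univ.filter (fun t : ZMod p => t ≠ 0),
          ∑ x ∈ univ.filter (fun x : ZMod p => x ≠ 0),
            θ p (x + a * x⁻¹) * θ p (x * t + a * (x * t)⁻¹) := Finset.sum_comm
    _ = ((p : ℂ) - 1) + ∑ t ∈ (univ.filter (fun t : ZMod p => t ≠ 0)).erase (-1),
          K p (a * ((1 + t) ^ 2 * t⁻¹)) := by
        rw [← Finset.add_sum_erase _ _ hmem]
        congr 1
        · have : ∀ x ∈ univ.filter (fun x : ZMod p => x ≠ 0),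
              θ p (x + a * x⁻¹) * θ p (x * (-1) + a * (x * (-1))⁻¹) = 1 := by
            intro x hx
            have hx0 : x ≠ 0 := (Finset.mem_filter.mp hx).2
            rw [← theta_add, show x + a * x⁻¹ + (x * (-1) + a * (x * (-1))⁻¹) = 0 by
              rw [mul_neg_one, inv_neg]; ring, theta_zero]
          rw [Finset.sum_congr rfl this, Finset.sum_const, nz_card, nsmul_eq_mul, mul_one,
            Nat.cast_sub hp1, Nat.cast_one]
        · refine Finset.sum_congr rfl fun t ht => ?_
          obtain ⟨ht1, ht0'⟩ := Finset.mem_erase.mp ht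
          exact inner_t p a t (Finset.mem_filter.mp ht0').2 ht1
    _ = ((p : ℂ) - 1) + ∑ c ∈ univ.filter (fun c : ZMod p => c ≠ 0),
          (1 + Φ p (c ^ 2 - 4 * c)) * K p (a * c) := by
        rw [sigma_reindex p hp (fun c => K p (a * c)), pair_sum p hp (fun c => K p (a * c))]
    _ = p + ∑ c ∈ univ.filter (fun c : ZMod p => c ≠ 0),
          Φ p (c ^ 2 - 4 * c) * K p (a * c) := by
        have : ∀ c ∈ univ.filter (fun c : ZMod p => c ≠ 0),
            (1 + Φ p (c ^ 2 - 4 * c)) * K p (a * c)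
              = K p (a * c) + Φ p (c ^ 2 - 4 * c) * K p (a * c) := fun c _ => by ring
        rw [Finset.sum_congr rfl this, Finset.sum_add_distrib, sum_K_shift p ha]
        ring

end Ksq2


section Rest
variable (p : ℕ) [Fact p.Prime] (hp : Odd p)
include hp

lemma my_four_ne_zero : (4 : ZMod p) ≠ 0 := by
  intro h
  have : (2 : ZMod p) * 2 = 0 := by linear_combination h
  rcases mul_eq_zero.mp this with h' | h' <;> exact phi_two_ne_zero p hp h'

lemma phi_neg_four : Φ p (-4 : ZMod p) = Φ p (-1) := by
  have h2 := phi_two_ne_zero p hp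
  rw [show (-4 : ZMod p) = (-1) * (2 * 2) by ring, phi_mul, phi_mul, phi_self_mul p h2, mul_one]

lemma H2_eq {x : ZMod p} (hx : x ≠ 0) : H₂ p x = Φ p (-1) * Cs p x := by
  have hk : (-x⁻¹ : ZMod p) ≠ 0 := neg_ne_zero.mpr (inv_ne_zero hx)
  rw [H₂, Cs, Finset.mul_sum]
  rw [univ_mul_right p hk (fun u => Φ p u * Φ p (1 - u) * Φ p (1 - x * u))]
  rw [show ∑ t : ZMod p, Φ p (t * -x⁻¹) * Φ p (1 - t * -x⁻¹) * Φ p (1 - x * (t * -x⁻¹))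
      = ∑ t : ZMod p, Φ p (t * -x⁻¹) * Φ p (1 - t * -x⁻¹) * Φ p (1 - x * (t * -x⁻¹)) from rfl]
  refine Finset.sum_congr rfl fun t _ => ?_
  have e1 : t * -x⁻¹ = (-1) * x⁻¹ * t := by ring
  have e2 : 1 - t * -x⁻¹ = x⁻¹ * (t + x) := by field_simp; ring
  have e3 : 1 - x * (t * -x⁻¹) = t + 1 := by field_simp; ring
  rw [e2, e3, e1, phi_mul, phi_mul, phi_mul, phi_inv p hp]
  have hxx := phi_self_mul p hx
  calc Φ p (-1) * Φ p x * Φ p t * (Φ p x * Φ p (t + x)) * Φ p (t + 1)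
      = (Φ p x * Φ p x) * (Φ p (-1) * (Φ p t * Φ p (t + 1) * Φ p (t + x))) := by ring
    _ = Φ p (-1) * (Φ p t * Φ p (t + 1) * Φ p (t + x)) := by rw [hxx, one_mul]

lemma D_lemma {b : ZMod p} (hb : b ≠ 0) :
    ∑ c : ZMod p, Φ p c * Φ p (c - 4) * Φ p (c * b - 4) = Φ p (-1) * Cs p b := by
  have h4 : (4 : ZMod p) ≠ 0 := my_four_ne_zero p hp
  have hk : ((-4) * b⁻¹ : ZMod p) ≠ 0 := mul_ne_zero (neg_ne_zero.mpr h4) (inv_ne_zero hb)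
  rw [Cs, Finset.mul_sum]
  rw [univ_mul_right p hk (fun c => Φ p c * Φ p (c - 4) * Φ p (c * b - 4))]
  refine Finset.sum_congr rfl fun t _ => ?_
  have e1 : t * ((-4) * b⁻¹) = ((-4) * b⁻¹) * t := by ring
  have e2 : t * ((-4) * b⁻¹) - 4 = ((-4) * b⁻¹) * (t + b) := by field_simp; ring
  have e3 : t * ((-4) * b⁻¹) * b - 4 = (-4) * (t + 1) := by field_simp; ring
  rw [e2, e3, e1, phi_mul p ((-4)*b⁻¹) t, phi_mul p ((-4)*b⁻¹) (t+b), phi_mul p (-4 : ZMod p) (t+1)]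
  have hkk := phi_self_mul p hk
  rw [show ((-4 : ZMod p)) * b⁻¹ = (-4) * b⁻¹ from rfl]
  calc Φ p ((-4) * b⁻¹) * Φ p t * (Φ p ((-4) * b⁻¹) * Φ p (t + b)) * (Φ p (-4) * Φ p (t + 1))
      = (Φ p ((-4) * b⁻¹) * Φ p ((-4) * b⁻¹)) * (Φ p (-4) * (Φ p t * Φ p (t + 1) * Φ p (t + b))) := by
        ring
    _ = Φ p (-1) * (Φ p t * Φ p (t + 1) * Φ p (t + b)) := by
        rw [hkk, one_mul, phi_neg_four p hp]

lemma shift_first {c : ZMod p} (hc : c ≠ 0) :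
    ∑ a : ZMod p, Φ p a * K p (a * c) = Φ p c * (Φ p (-1) * p) := by
  rw [univ_mul_right p (inv_ne_zero hc) (fun a => Φ p a * K p (a * c))]
  have : ∀ t : ZMod p, Φ p (t * c⁻¹) * K p (t * c⁻¹ * c) = Φ p c * (Φ p t * K p t) := by
    intro t
    rw [mul_assoc, inv_mul_cancel₀ hc, mul_one, phi_mul, phi_inv p hp]
    ring
  rw [Finset.sum_congr rfl fun t _ => this t, ← Finset.mul_sum, first_moment p hp]

lemma Mcd {c : ZMod p} (hc : c ≠ 0) (d : ZMod p) :
    ∑ a : ZMod p, Φ p a * (K p (a * c) * K p (a * d))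
      = Φ p c * (Φ p (-1) * (p : ℂ) * Cs p (d * c⁻¹)) := by
  rw [univ_mul_right p (inv_ne_zero hc) (fun a => Φ p a * (K p (a * c) * K p (a * d)))]
  have : ∀ t : ZMod p, Φ p (t * c⁻¹) * (K p (t * c⁻¹ * c) * K p (t * c⁻¹ * d))
      = Φ p c * (Φ p t * (K p t * K p (t * (d * c⁻¹)))) := by
    intro t
    rw [mul_assoc, inv_mul_cancel₀ hc, mul_one, phi_mul, phi_inv p hp,
      show t * c⁻¹ * d = t * (d * c⁻¹) by ring]
    ring
  rw [Finset.sum_congr rfl fun t _ => this t, ← Finset.mul_sum, M_lemma p hp]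

lemma second_moment : ∑ a : ZMod p, Φ p a * K p a ^ 2 = -(p : ℂ) := by
  have hm1 := phi_self_mul p (neg_one_ne_zero' p)
  rw [← nz_sum_eq_univ_sum p (fun a => Φ p a * K p a ^ 2) (by simp [phi_zero])]
  have step : ∀ a ∈ univ.filter (fun a : ZMod p => a ≠ 0),
      Φ p a * K p a ^ 2 = Φ p a * (p : ℂ)
        + ∑ c ∈ univ.filter (fun c : ZMod p => c ≠ 0),
            Φ p (c ^ 2 - 4 * c) * (Φ p a * K p (a * c)) := by
    intro a ha
    rw [K_sq p hp (Finset.mem_filter.mp ha).2, mul_add, Finset.mul_sum]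
    congr 1
    exact Finset.sum_congr rfl fun c _ => by ring
  rw [Finset.sum_congr rfl step, Finset.sum_add_distrib, Finset.sum_comm]
  have part1 : ∑ a ∈ univ.filter (fun a : ZMod p => a ≠ 0), Φ p a * (p : ℂ) = 0 := by
    rw [← Finset.sum_mul, nz_sum_eq_univ_sum p (Φ p) (phi_zero p), phi_sum p hp, zero_mul]
  have part2 : ∀ c ∈ univ.filter (fun c : ZMod p => c ≠ 0),
      ∑ a ∈ univ.filter (fun a : ZMod p => a ≠ 0), Φ p (c ^ 2 - 4 * c) * (Φ p a * K p (a * c))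
        = Φ p (c - 4) * (Φ p (-1) * p) := by
    intro c hc
    have hc0 : c ≠ 0 := (Finset.mem_filter.mp hc).2
    rw [← Finset.mul_sum, nz_sum_eq_univ_sum p (fun a => Φ p a * K p (a * c)) (by simp [phi_zero]),
      shift_first p hp hc0]
    have : Φ p (c ^ 2 - 4 * c) * Φ p c = Φ p (c - 4) := by
      rw [show c ^ 2 - 4 * c = c * (c - 4) by ring, phi_mul]
      calc Φ p c * Φ p (c - 4) * Φ p c = (Φ p c * Φ p c) * Φ p (c - 4) := by ring
        _ = Φ p (c - 4) := by rw [phi_self_mul p hc0, one_mul]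
    rw [← this]
    ring
  rw [part1, Finset.sum_congr rfl part2, ← Finset.sum_mul]
  have part3 : ∑ c ∈ univ.filter (fun c : ZMod p => c ≠ 0), Φ p (c - 4) = - Φ p (-1) := by
    have htot : ∑ c : ZMod p, Φ p (c - 4) = 0 := by
      rw [← phi_sum p hp]
      exact Fintype.sum_bijective (· - (4 : ZMod p)) (Equiv.subRight (4 : ZMod p)).bijective
        (fun c => Φ p (c - 4)) (Φ p) (fun c => rfl)
    have hsplit := Finset.sum_filter_add_sum_filter_not (univ : Finset (ZMod p))
      (fun c => c ≠ 0) (fun c => Φ p (c - 4))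
    have h0 : univ.filter (fun c : ZMod p => ¬ c ≠ 0) = {0} := by ext c; simp
    rw [h0, Finset.sum_singleton, htot, show (0 : ZMod p) - 4 = (-4 : ZMod p) by ring,
      phi_neg_four p hp] at hsplit
    linear_combination hsplit
  rw [part3, zero_add]
  calc -Φ p (-1) * (Φ p (-1) * p) = -((Φ p (-1) * Φ p (-1)) * p) := by ring
    _ = -(p : ℂ) := by rw [hm1, one_mul]

end Rest


section Fourth
variable (p : ℕ) [Fact p.Prime] (hp : Odd p)
include hp

lemma char_simplify {c : ZMod p} (hc : c ≠ 0) (b : ZMod p) :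
    Φ p (c ^ 2 - 4 * c) * Φ p ((b * c) ^ 2 - 4 * (b * c)) * Φ p c
      = Φ p b * (Φ p c * Φ p (c - 4) * Φ p (c * b - 4)) := by
  rw [show (c : ZMod p) ^ 2 - 4 * c = c * (c - 4) by ring,
    show ((b : ZMod p) * c) ^ 2 - 4 * (b * c) = c * (b * (c * b - 4)) by ring,
    phi_mul, phi_mul]
  calc Φ p c * Φ p (c - 4) * (Φ p c * Φ p (b * (c * b - 4))) * Φ p c
      = (Φ p c * Φ p c) * (Φ p c * Φ p (c - 4) * Φ p (b * (c * b - 4))) := by ring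
    _ = Φ p c * Φ p (c - 4) * (Φ p b * Φ p (c * b - 4)) := by
        rw [phi_self_mul p hc, one_mul, phi_mul]
    _ = Φ p b * (Φ p c * Φ p (c - 4) * Φ p (c * b - 4)) := by ring

lemma fourth_moment :
    ∑ a ∈ univ.filter (fun a : ZMod p => a ≠ 0), Φ p a * (K p a ^ 2 - p) ^ 2
      = p * ∑ b : ZMod p, Φ p b * Cs p b ^ 2 := by
  have hm1 := phi_self_mul p (neg_one_ne_zero' p)
  calc ∑ a ∈ univ.filter (fun a : ZMod p => a ≠ 0), Φ p a * (K p a ^ 2 - p) ^ 2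
      = ∑ a ∈ univ.filter (fun a : ZMod p => a ≠ 0),
          ∑ c ∈ univ.filter (fun c : ZMod p => c ≠ 0),
            ∑ d ∈ univ.filter (fun d : ZMod p => d ≠ 0),
              Φ p (c ^ 2 - 4 * c) * Φ p (d ^ 2 - 4 * d)
                * (Φ p a * (K p (a * c) * K p (a * d))) := by
        refine Finset.sum_congr rfl fun a ha => ?_
        have ha0 := (mem_filter.mp ha).2
        have hKs : K p a ^ 2 - (p : ℂ)
            = ∑ c ∈ univ.filter (fun c : ZMod p => c ≠ 0), Φ p (c ^ 2 - 4 * c) * K p (a * c) := by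
          rw [K_sq p hp ha0]; ring
        rw [hKs, sq, Finset.sum_mul_sum, Finset.mul_sum]
        refine Finset.sum_congr rfl fun c _ => ?_
        rw [Finset.mul_sum]
        exact Finset.sum_congr rfl fun d _ => by ring
    _ = ∑ c ∈ univ.filter (fun c : ZMod p => c ≠ 0),
          ∑ d ∈ univ.filter (fun d : ZMod p => d ≠ 0),
            Φ p (c ^ 2 - 4 * c) * Φ p (d ^ 2 - 4 * d)
              * (Φ p c * (Φ p (-1) * (p : ℂ) * Cs p (d * c⁻¹))) := by
        rw [Finset.sum_comm]
        refine Finset.sum_congr rfl fun c hc => ?_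
        rw [Finset.sum_comm]
        refine Finset.sum_congr rfl fun d _ => ?_
        rw [← Finset.mul_sum,
          nz_sum_eq_univ_sum p (fun a => Φ p a * (K p (a * c) * K p (a * d)))
            (by simp [phi_zero]),
          Mcd p hp (mem_filter.mp hc).2 d]
    _ = ∑ c ∈ univ.filter (fun c : ZMod p => c ≠ 0),
          ∑ b ∈ univ.filter (fun b : ZMod p => b ≠ 0),
            Φ p b * (Φ p c * Φ p (c - 4) * Φ p (c * b - 4))
              * (Φ p (-1) * (p : ℂ) * Cs p b) := by
        refine Finset.sum_congr rfl fun c hc => ?_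
        have hc0 := (mem_filter.mp hc).2
        rw [nz_mul_right p hc0 (fun d => Φ p (c ^ 2 - 4 * c) * Φ p (d ^ 2 - 4 * d)
          * (Φ p c * (Φ p (-1) * (p : ℂ) * Cs p (d * c⁻¹))))]
        refine Finset.sum_congr rfl fun b _ => ?_
        have hbc : b * c * c⁻¹ = b := by
          rw [mul_assoc, mul_inv_cancel₀ hc0, mul_one]
        rw [hbc, ← char_simplify p hp hc0 b]
        ring
    _ = ∑ b ∈ univ.filter (fun b : ZMod p => b ≠ 0),
          (p : ℂ) * (Φ p b * Cs p b ^ 2) := by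
        rw [Finset.sum_comm]
        refine Finset.sum_congr rfl fun b hb => ?_
        have hb0 := (mem_filter.mp hb).2
        have hpull : ∀ c ∈ univ.filter (fun c : ZMod p => c ≠ 0),
            Φ p b * (Φ p c * Φ p (c - 4) * Φ p (c * b - 4)) * (Φ p (-1) * (p : ℂ) * Cs p b)
              = (Φ p b * (Φ p (-1) * (p : ℂ) * Cs p b))
                * (Φ p c * Φ p (c - 4) * Φ p (c * b - 4)) := fun c _ => by ring
        rw [Finset.sum_congr rfl hpull, ← Finset.mul_sum,
          nz_sum_eq_univ_sum p (fun c => Φ p c * Φ p (c - 4) * Φ p (c * b - 4))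
            (by simp [phi_zero]),
          D_lemma p hp hb0]
        calc Φ p b * (Φ p (-1) * (p : ℂ) * Cs p b) * (Φ p (-1) * Cs p b)
            = (Φ p (-1) * Φ p (-1)) * ((p : ℂ) * (Φ p b * Cs p b ^ 2)) := by ring
          _ = (p : ℂ) * (Φ p b * Cs p b ^ 2) := by rw [hm1, one_mul]
    _ = p * ∑ b : ZMod p, Φ p b * Cs p b ^ 2 := by
        rw [← Finset.mul_sum,
          nz_sum_eq_univ_sum p (fun b => Φ p b * Cs p b ^ 2) (by simp [phi_zero])]

end Fourth


/-- **`T₄,φ` via hypergeometric values.**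
`Σ_{a≠0} φ(a)K(a)⁴ - 3p Σ_{a≠0} φ(a)K(a)² = p² + p Σ_{x≠0} φ(x) H₂(x)²`. -/
theorem T4_eq_hypergeometric_sum (p : ℕ) [Fact p.Prime] (hp : Odd p) :
    ∑ a ∈ univ.filter (fun a : ZMod p => a ≠ 0), Φ p a * K p a ^ 4 -
        3 * p * ∑ a ∈ univ.filter (fun a : ZMod p => a ≠ 0), Φ p a * K p a ^ 2 =
      (p : ℂ) ^ 2 + p * ∑ x ∈ univ.filter (fun x : ZMod p => x ≠ 0),
        Φ p x * (H₂ p x) ^ 2 := by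
  have hm1 := phi_self_mul p (neg_one_ne_zero' p)
  have hS2 : ∑ a ∈ univ.filter (fun a : ZMod p => a ≠ 0), Φ p a * K p a ^ 2 = -(p : ℂ) := by
    rw [nz_sum_eq_univ_sum p (fun a => Φ p a * K p a ^ 2) (by simp [phi_zero])]
    exact second_moment p hp
  have hS0 : ∑ a ∈ univ.filter (fun a : ZMod p => a ≠ 0), Φ p a = 0 := by
    rw [nz_sum_eq_univ_sum p (Φ p) (phi_zero p)]
    exact phi_sum p hp
  have hRHS : ∑ x ∈ univ.filter (fun x : ZMod p => x ≠ 0), Φ p x * (H₂ p x) ^ 2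
      = ∑ b : ZMod p, Φ p b * Cs p b ^ 2 := by
    rw [← nz_sum_eq_univ_sum p (fun b => Φ p b * Cs p b ^ 2) (by simp [phi_zero])]
    refine Finset.sum_congr rfl fun x hx => ?_
    rw [H2_eq p hp (mem_filter.mp hx).2]
    calc Φ p x * (Φ p (-1) * Cs p x) ^ 2
        = (Φ p (-1) * Φ p (-1)) * (Φ p x * Cs p x ^ 2) := by ring
      _ = Φ p x * Cs p x ^ 2 := by rw [hm1, one_mul]
  have h4 : ∑ a ∈ univ.filter (fun a : ZMod p => a ≠ 0), Φ p a * K p a ^ 4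
      = ∑ a ∈ univ.filter (fun a : ZMod p => a ≠ 0),
          (Φ p a * (K p a ^ 2 - p) ^ 2 + 2 * p * (Φ p a * K p a ^ 2) - (p:ℂ) ^ 2 * Φ p a) :=
    Finset.sum_congr rfl fun a _ => by ring
  have h5 : ∑ a ∈ univ.filter (fun a : ZMod p => a ≠ 0), Φ p a * K p a ^ 4
      = p * (∑ b : ZMod p, Φ p b * Cs p b ^ 2) + 2 * p * (-(p : ℂ)) - (p:ℂ) ^ 2 * 0 := by
    rw [h4, Finset.sum_sub_distrib, Finset.sum_add_distrib, ← Finset.mul_sum, ← Finset.mul_sum,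
      fourth_moment p hp, hS2, hS0]
  rw [h5, hS2, hRHS]
  ring
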